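/- There exists a constant c₀ > 0, depending only on k1 and k2 and independent of N and f, such that if ũᵃ is the atomistic solution and ũᶜ is the continuum solution for the same load f, then ‖ũᵃ − ũᶜ‖_{ℓ²({0,…,N})} ≤ c₀ N² ‖Δ1² ũᵃ‖_{ℓ²({2,…,N−2})}. -/

import Mathlib

open Finset

lemma aux_Icc_insert (a b : ℤ) (h : a ≤ b) :
    Finset.Icc a b = insert b (Finset.Icc a (b - 1)) := by
  ext x; simp only [Finset.mem_Icc, Finset.mem_insert]; omega

lemma aux_telescope (e : ℤ → ℝ) (h1 : e 1 = 0) :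
    ∀ i : ℤ, 1 ≤ i → e i = ∑ j ∈ Finset.Icc 1 (i - 1), (e (j + 1) - e j) := by
  refine Int.le_induction ?_ ?_
  · rw [show (1:ℤ) - 1 = 0 by ring, Finset.Icc_eq_empty (by norm_num), Finset.sum_empty, h1]
  · intro n hn ih
    rw [show n + 1 - 1 = n by ring, aux_Icc_insert 1 n (by omega),
      Finset.sum_insert (by simp [Finset.mem_Icc])]
    rw [← ih]; ring

lemma aux_sbp (e : ℤ → ℝ) (a : ℤ) :
    ∀ b : ℤ, a ≤ b →
      ∑ j ∈ Finset.Icc a b, (e (j + 1) - e j) ^ 2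
          + ∑ i ∈ Finset.Icc (a + 1) b, (e (i - 1) - 2 * e i + e (i + 1)) * e i
        = (e (b + 1) - e b) * e (b + 1) - (e (a + 1) - e a) * e a := by
  refine Int.le_induction ?_ ?_
  · rw [Finset.Icc_self, Finset.sum_singleton, Finset.Icc_eq_empty (by omega), Finset.sum_empty]
    ring
  · intro b hb ih
    rw [aux_Icc_insert a (b + 1) (by omega),
      Finset.sum_insert (by simp [Finset.mem_Icc]),
      aux_Icc_insert (a + 1) (b + 1) (by omega),
      Finset.sum_insert (by simp [Finset.mem_Icc])]
    rw [show b + 1 - 1 = b by ring, show b + 1 + 1 = b + 2 by ring]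
    linear_combination ih

lemma aux_stability (N : ℤ) (hN : 5 ≤ N) (e : ℤ → ℝ)
    (h0 : e 0 = 0) (h1 : e 1 = 0) (hN1 : e (N - 1) = 0) (hNN : e N = 0) :
    ∑ i ∈ Finset.Icc (0:ℤ) N, e i ^ 2 ≤
      4 * (N : ℝ) ^ 4 * ∑ i ∈ Finset.Icc (2:ℤ) (N - 2),
        (e (i - 1) - 2 * e i + e (i + 1)) ^ 2 := by
  have hNR : (5:ℝ) ≤ (N:ℝ) := by exact_mod_cast hN
  have hT0 : (0:ℝ) ≤ ∑ j ∈ Finset.Icc (1:ℤ) (N - 2), (e (j + 1) - e j) ^ 2 :=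
    Finset.sum_nonneg fun _ _ => sq_nonneg _
  have hQ0 : (0:ℝ) ≤ ∑ i ∈ Finset.Icc (2:ℤ) (N - 2),
      (e (i - 1) - 2 * e i + e (i + 1)) ^ 2 :=
    Finset.sum_nonneg fun _ _ => sq_nonneg _
  have hE0 : (0:ℝ) ≤ ∑ i ∈ Finset.Icc (0:ℤ) N, e i ^ 2 :=
    Finset.sum_nonneg fun _ _ => sq_nonneg _
  -- pointwise bound
  have hpt : ∀ i ∈ Finset.Icc (0:ℤ) N,
      e i ^ 2 ≤ (N:ℝ) * ∑ j ∈ Finset.Icc (1:ℤ) (N - 2), (e (j + 1) - e j) ^ 2 := by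
    intro i hi
    rw [Finset.mem_Icc] at hi
    rcases eq_or_lt_of_le hi.1 with h | h
    · rw [← h, h0]; nlinarith [hT0]
    rcases eq_or_lt_of_le hi.2 with h2 | h2
    · rw [h2, hNN]; nlinarith [hT0]
    have hi1 : 1 ≤ i := h
    rw [aux_telescope e h1 i hi1]
    calc (∑ j ∈ Finset.Icc 1 (i - 1), (e (j + 1) - e j)) ^ 2
        ≤ (Finset.Icc (1:ℤ) (i - 1)).card *
            ∑ j ∈ Finset.Icc 1 (i - 1), (e (j + 1) - e j) ^ 2 :=
          sq_sum_le_card_mul_sum_sq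
      _ ≤ (N:ℝ) * ∑ j ∈ Finset.Icc (1:ℤ) (N - 2), (e (j + 1) - e j) ^ 2 := by
          apply mul_le_mul
          · rw [Int.card_Icc]
            have hcard : (((i - 1) + 1 - 1).toNat : ℤ) ≤ N := by omega
            exact_mod_cast hcard
          · exact Finset.sum_le_sum_of_subset_of_nonneg
              (Finset.Icc_subset_Icc_right (by omega)) (fun _ _ _ => sq_nonneg _)
          · exact Finset.sum_nonneg fun _ _ => sq_nonneg _
          · linarith
  -- E ≤ 2 N² T
  have hET : ∑ i ∈ Finset.Icc (0:ℤ) N, e i ^ 2 ≤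
      2 * (N:ℝ) ^ 2 * ∑ j ∈ Finset.Icc (1:ℤ) (N - 2), (e (j + 1) - e j) ^ 2 := by
    calc ∑ i ∈ Finset.Icc (0:ℤ) N, e i ^ 2
        ≤ ∑ _i ∈ Finset.Icc (0:ℤ) N,
            (N:ℝ) * ∑ j ∈ Finset.Icc (1:ℤ) (N - 2), (e (j + 1) - e j) ^ 2 :=
          Finset.sum_le_sum hpt
      _ = ((Finset.Icc (0:ℤ) N).card : ℝ) *
            ((N:ℝ) * ∑ j ∈ Finset.Icc (1:ℤ) (N - 2), (e (j + 1) - e j) ^ 2) := by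
          rw [Finset.sum_const, nsmul_eq_mul]
      _ ≤ _ := by
          have hc : ((Finset.Icc (0:ℤ) N).card : ℝ) = (N:ℝ) + 1 := by
            rw [Int.card_Icc]
            have : ((N + 1 - 0).toNat : ℤ) = N + 1 := by omega
            exact_mod_cast this
          rw [hc]
          nlinarith [mul_nonneg (by nlinarith : (0:ℝ) ≤ (N:ℝ) ^ 2 - (N:ℝ)) hT0]
  -- summation by parts
  have hsbp : ∑ j ∈ Finset.Icc (1:ℤ) (N - 2), (e (j + 1) - e j) ^ 2 =
      -∑ i ∈ Finset.Icc (2:ℤ) (N - 2), (e (i - 1) - 2 * e i + e (i + 1)) * e i := by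
    have h := aux_sbp e 1 (N - 2) (by omega)
    rw [show (1:ℤ) + 1 = 2 by norm_num, show N - 2 + 1 = N - 1 by ring, hN1, h1] at h
    linear_combination h
  -- T² ≤ Q E
  have hTQE : (∑ j ∈ Finset.Icc (1:ℤ) (N - 2), (e (j + 1) - e j) ^ 2) ^ 2 ≤
      (∑ i ∈ Finset.Icc (2:ℤ) (N - 2), (e (i - 1) - 2 * e i + e (i + 1)) ^ 2) *
        ∑ i ∈ Finset.Icc (0:ℤ) N, e i ^ 2 := by
    rw [hsbp, neg_sq]
    calc (∑ i ∈ Finset.Icc (2:ℤ) (N - 2), (e (i - 1) - 2 * e i + e (i + 1)) * e i) ^ 2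
        ≤ (∑ i ∈ Finset.Icc (2:ℤ) (N - 2), (e (i - 1) - 2 * e i + e (i + 1)) ^ 2) *
            ∑ i ∈ Finset.Icc (2:ℤ) (N - 2), e i ^ 2 :=
          Finset.sum_mul_sq_le_sq_mul_sq _ _ _
      _ ≤ _ := by
          apply mul_le_mul_of_nonneg_left _ hQ0
          exact Finset.sum_le_sum_of_subset_of_nonneg
            (Finset.Icc_subset_Icc (by omega) (by omega)) (fun _ _ _ => sq_nonneg _)
  -- combine
  set E := ∑ i ∈ Finset.Icc (0:ℤ) N, e i ^ 2
  set T := ∑ j ∈ Finset.Icc (1:ℤ) (N - 2), (e (j + 1) - e j) ^ 2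
  set Q := ∑ i ∈ Finset.Icc (2:ℤ) (N - 2), (e (i - 1) - 2 * e i + e (i + 1)) ^ 2
  rcases le_or_gt E 0 with hE | hE
  · nlinarith [mul_nonneg (by positivity : (0:ℝ) ≤ 4 * (N:ℝ) ^ 4) hQ0]
  have hb : (0:ℝ) ≤ 2 * (N:ℝ) ^ 2 * T := le_trans hE0 hET
  have h1' : E * E ≤ (2 * (N:ℝ) ^ 2 * T) * (2 * (N:ℝ) ^ 2 * T) :=
    mul_le_mul hET hET hE0 hb
  have h2' : (2 * (N:ℝ) ^ 2 * T) * (2 * (N:ℝ) ^ 2 * T) = 4 * (N:ℝ) ^ 4 * T ^ 2 := by ring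
  have h3' : 4 * (N:ℝ) ^ 4 * T ^ 2 ≤ 4 * (N:ℝ) ^ 4 * (Q * E) :=
    mul_le_mul_of_nonneg_left hTQE (by positivity)
  have h4' : E * E ≤ (4 * (N:ℝ) ^ 4 * Q) * E := by nlinarith [h1', h3']
  exact le_of_mul_le_mul_right h4' hE

/-- the continuum modeling error (Proposition `cont.error`). -/
theorem continuum_modeling_error (k1 k2 : ℝ)
    (hk1 : 0 < k1) (hk2 : k2 < 0) (hk : 0 < k1 + 4 * k2) :
    ∃ c0 : ℝ, 0 < c0 ∧
      ∀ (N : ℤ), 5 ≤ N →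
      ∀ (f ua uc : ℤ → ℝ),
        -- ua is the atomistic solution
        (∀ i, 2 ≤ i → i ≤ N - 2 →
          -k1 * (ua (i - 1) - 2 * ua i + ua (i + 1))
            - k2 * (ua (i - 2) - 2 * ua i + ua (i + 2)) = f i) →
        ua 0 = 0 → ua 1 = 0 → ua (N - 1) = 0 → ua N = 0 →
        -- uc is the continuum solution for the same load f
        (∀ i, 2 ≤ i → i ≤ N - 2 →
          -(k1 + 4 * k2) * (uc (i - 1) - 2 * uc i + uc (i + 1)) = f i) →
        uc 0 = 0 → uc 1 = 0 → uc (N - 1) = 0 → uc N = 0 →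
        Real.sqrt (∑ i ∈ Finset.Icc (0 : ℤ) N, (ua i - uc i) ^ 2) ≤
          c0 * (N : ℝ) ^ 2 *
            Real.sqrt (∑ i ∈ Finset.Icc (2 : ℤ) (N - 2),
              (ua (i - 2) - 4 * ua (i - 1) + 6 * ua i - 4 * ua (i + 1)
                + ua (i + 2)) ^ 2) := by
  refine ⟨(-2 * k2) / (k1 + 4 * k2), div_pos (by linarith) hk, ?_⟩
  intro N hN f ua uc ha ha0 ha1 haN1 haN hc hc0 hc1 hcN1 hcN
  have hstab := aux_stability N hN (fun i => ua i - uc i)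
    (by simp [ha0, hc0]) (by simp [ha1, hc1]) (by simp [haN1, hcN1]) (by simp [haN, hcN])
  beta_reduce at hstab
  have key : ∀ i ∈ Finset.Icc (2:ℤ) (N - 2),
      ((fun i => ua i - uc i) (i - 1) - 2 * (fun i => ua i - uc i) i
          + (fun i => ua i - uc i) (i + 1)) ^ 2 =
        ((-k2) / (k1 + 4 * k2)) ^ 2 *
          (ua (i - 2) - 4 * ua (i - 1) + 6 * ua i - 4 * ua (i + 1) + ua (i + 2)) ^ 2 := by
    intro i hi
    rw [Finset.mem_Icc] at hi
    have hL : (k1 + 4 * k2) *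
        ((ua (i - 1) - uc (i - 1)) - 2 * (ua i - uc i) + (ua (i + 1) - uc (i + 1))) =
        -k2 * (ua (i - 2) - 4 * ua (i - 1) + 6 * ua i - 4 * ua (i + 1) + ua (i + 2)) := by
      linear_combination hc i hi.1 hi.2 - ha i hi.1 hi.2
    have hL2 : ((ua (i - 1) - uc (i - 1)) - 2 * (ua i - uc i) + (ua (i + 1) - uc (i + 1))) =
        (-k2 * (ua (i - 2) - 4 * ua (i - 1) + 6 * ua i - 4 * ua (i + 1) + ua (i + 2)))
          / (k1 + 4 * k2) := by
      rw [eq_div_iff hk.ne']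
      linear_combination hL
    simp only []
    rw [hL2]; ring
  rw [Finset.sum_congr rfl key, ← Finset.mul_sum] at hstab
  have hD0 : (0:ℝ) ≤ ∑ i ∈ Finset.Icc (2:ℤ) (N - 2),
      (ua (i - 2) - 4 * ua (i - 1) + 6 * ua i - 4 * ua (i + 1) + ua (i + 2)) ^ 2 :=
    Finset.sum_nonneg fun _ _ => sq_nonneg _
  have hX : (0:ℝ) ≤ (-2 * k2) / (k1 + 4 * k2) * (N:ℝ) ^ 2 :=
    mul_nonneg (div_nonneg (by linarith) (by linarith)) (sq_nonneg _)
  calc Real.sqrt (∑ i ∈ Finset.Icc (0 : ℤ) N, (ua i - uc i) ^ 2)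
      ≤ Real.sqrt (((-2 * k2) / (k1 + 4 * k2) * (N:ℝ) ^ 2) ^ 2 *
          ∑ i ∈ Finset.Icc (2:ℤ) (N - 2),
            (ua (i - 2) - 4 * ua (i - 1) + 6 * ua i - 4 * ua (i + 1) + ua (i + 2)) ^ 2) := by
        apply Real.sqrt_le_sqrt
        refine le_trans hstab (le_of_eq ?_)
        ring
    _ = (-2 * k2) / (k1 + 4 * k2) * (N:ℝ) ^ 2 *
          Real.sqrt (∑ i ∈ Finset.Icc (2:ℤ) (N - 2),
            (ua (i - 2) - 4 * ua (i - 1) + 6 * ua i - 4 * ua (i + 1) + ua (i + 2)) ^ 2) := by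
        rw [Real.sqrt_mul (sq_nonneg _), Real.sqrt_sq hX]
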